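/- Let f : ℝ^d → ℝ be C⁴ at a local minimum x* with F = ker ∇²f(x*) and E = F^⊥. Then for all h ∈ ℝ^d and all λ ∈ ℝ, the quantity (1/2)∇²f(x*)·p_E(h)^{⊗2} + (λ/2)∇³f(x*)·p_E(h)⊗p_F(h)^{⊗2} + (λ²/4!)∇⁴f(x*)·p_F(h)^{⊗4} is nonnegative; consequently (∇³f(x*)·p_E(h)⊗p_F(h)^{⊗2})² ≤ (1/3)(∇²f(x*)·p_E(h)^{⊗2})(∇⁴f(x*)·p_F(h)^{⊗4}). -/

import Mathlib

open Set
set_option maxHeartbeats 1600000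
set_option synthInstance.maxHeartbeats 400000


private lemma anti_of_hasDerivAt' {h h' : ℝ → ℝ} (hd : ∀ t, HasDerivAt h (h' t) t)
    {a b : ℝ} (hneg : ∀ t ∈ Ioo a b, h' t < 0) : StrictAntiOn h (Icc a b) :=
  strictAntiOn_of_deriv_neg (convex_Icc a b)
    (fun t _ => (hd t).continuousAt.continuousWithinAt)
    (fun t ht => by rw [interior_Icc] at ht; rw [(hd t).deriv]; exact hneg t ht)

private lemma mono_of_hasDerivAt' {h h' : ℝ → ℝ} (hd : ∀ t, HasDerivAt h (h' t) t)
    {a b : ℝ} (hpos : ∀ t ∈ Ioo a b, 0 < h' t) : StrictMonoOn h (Icc a b) :=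
  strictMonoOn_of_deriv_pos (convex_Icc a b)
    (fun t _ => (hd t).continuousAt.continuousWithinAt)
    (fun t ht => by rw [interior_Icc] at ht; rw [(hd t).deriv]; exact hpos t ht)

private lemma neg_right' {h h' : ℝ → ℝ} (hd : ∀ t, HasDerivAt h (h' t) t)
    {δ : ℝ} (h0 : h 0 = 0) (hneg : ∀ t ∈ Ioo (0:ℝ) δ, h' t < 0) :
    ∀ t ∈ Ioo (0:ℝ) δ, h t < 0 := by
  intro t ht
  have := anti_of_hasDerivAt' hd hneg
    (Set.mem_Icc.2 ⟨le_refl 0, (ht.1.trans ht.2).le⟩) (Set.mem_Icc.2 ⟨ht.1.le, ht.2.le⟩) ht.1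
  rwa [h0] at this

private lemma exists_delta_neg {g : ℝ → ℝ} (hc : ContinuousAt g 0) (hlt : g 0 < 0) :
    ∃ δ > 0, ∀ t : ℝ, |t| < δ → g t < 0 := by
  have h : g ⁻¹' Iio 0 ∈ nhds (0:ℝ) := hc (Iio_mem_nhds hlt)
  rcases Metric.mem_nhds_iff.1 h with ⟨δ, hδ, hball⟩
  exact ⟨δ, hδ, fun t ht => hball (by simpa [Real.dist_eq] using ht)⟩

private lemma min_contra_right {g : ℝ → ℝ} (hmin : IsLocalMin g 0) {δ : ℝ} (hδ : 0 < δ)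
    (hg : ∀ t ∈ Ioo (0:ℝ) δ, g t < g 0) : False := by
  obtain ⟨ε, hε, hm⟩ := Metric.eventually_nhds_iff.1 hmin
  have h1 : 0 < min δ ε / 2 := by positivity
  have h2 : min δ ε / 2 < δ := by have := min_le_left δ ε; linarith
  have h3 : dist (min δ ε / 2) 0 < ε := by
    have := min_le_right δ ε
    rw [Real.dist_eq, sub_zero, abs_of_pos h1]; linarith
  exact absurd (hm h3) (not_le.2 (hg _ ⟨h1, h2⟩))

private lemma min_contra_left {g : ℝ → ℝ} (hmin : IsLocalMin g 0) {δ : ℝ} (hδ : 0 < δ)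
    (hg : ∀ t ∈ Ioo (-δ) (0:ℝ), g t < g 0) : False := by
  obtain ⟨ε, hε, hm⟩ := Metric.eventually_nhds_iff.1 hmin
  have h0 : 0 < min δ ε / 2 := by positivity
  have h1 : -(min δ ε / 2) < 0 := by linarith
  have h2 : -δ < -(min δ ε / 2) := by have := min_le_left δ ε; linarith
  have h3 : dist (-(min δ ε / 2)) 0 < ε := by
    have := min_le_right δ ε
    rw [Real.dist_eq, sub_zero, abs_of_neg h1]; linarith
  exact absurd (hm h3) (not_le.2 (hg _ ⟨h2, h1⟩))

private lemma min_d2' {g g1 g2 : ℝ → ℝ}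
    (h1 : ∀ t, HasDerivAt g (g1 t) t) (h2 : ∀ t, HasDerivAt g1 (g2 t) t)
    (hc : ContinuousAt g2 0) (hmin : IsLocalMin g 0) : 0 ≤ g2 0 := by
  by_contra hlt
  push_neg at hlt
  obtain ⟨δ, hδ, hg2⟩ := exists_delta_neg hc hlt
  have hg10 : g1 0 = 0 := by have := hmin.deriv_eq_zero; rwa [(h1 0).deriv] at this
  have hg1 : ∀ t ∈ Ioo (0:ℝ) δ, g1 t < 0 :=
    neg_right' h2 hg10 (fun t ht => hg2 t (by rw [abs_of_pos ht.1]; exact ht.2))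
  refine min_contra_right hmin hδ (fun t ht => ?_)
  exact anti_of_hasDerivAt' h1 hg1
    (Set.mem_Icc.2 ⟨le_refl 0, (ht.1.trans ht.2).le⟩) (Set.mem_Icc.2 ⟨ht.1.le, ht.2.le⟩) ht.1

private lemma min_d3' {g g1 g2 g3 : ℝ → ℝ}
    (h1 : ∀ t, HasDerivAt g (g1 t) t) (h2 : ∀ t, HasDerivAt g1 (g2 t) t)
    (h3 : ∀ t, HasDerivAt g2 (g3 t) t)
    (hc : ContinuousAt g3 0) (hmin : IsLocalMin g 0) (hg20 : g2 0 = 0) : g3 0 = 0 := by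
  have hg10 : g1 0 = 0 := by have := hmin.deriv_eq_zero; rwa [(h1 0).deriv] at this
  by_contra hne
  rcases lt_or_gt_of_ne hne with hlt | hgt
  · obtain ⟨δ, hδ, hg3⟩ := exists_delta_neg hc hlt
    have hg2 : ∀ t ∈ Ioo (0:ℝ) δ, g2 t < 0 :=
      neg_right' h3 hg20 (fun t ht => hg3 t (by rw [abs_of_pos ht.1]; exact ht.2))
    have hg1 : ∀ t ∈ Ioo (0:ℝ) δ, g1 t < 0 := neg_right' h2 hg10 hg2
    refine min_contra_right hmin hδ (fun t ht => ?_)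
    exact anti_of_hasDerivAt' h1 hg1
      (Set.mem_Icc.2 ⟨le_refl 0, (ht.1.trans ht.2).le⟩) (Set.mem_Icc.2 ⟨ht.1.le, ht.2.le⟩) ht.1
  · obtain ⟨δ, hδ, hg3'⟩ := exists_delta_neg (g := fun t => -(g3 t)) hc.neg (by simpa using hgt)
    have hg3 : ∀ t : ℝ, |t| < δ → 0 < g3 t := fun t ht => by have := hg3' t ht; simpa using this
    have habs : ∀ t ∈ Ioo (-δ) (0:ℝ), |t| < δ := fun t ht => abs_lt.2 ⟨ht.1, ht.2.trans hδ⟩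
    have hmem0 : (0:ℝ) ∈ Icc (-δ) (0:ℝ) := Set.mem_Icc.2 ⟨by linarith, le_refl 0⟩
    have hg2 : ∀ t ∈ Ioo (-δ) (0:ℝ), g2 t < 0 := by
      intro t ht
      have := mono_of_hasDerivAt' h3 (fun s hs => hg3 s (habs s hs))
        (Set.mem_Icc.2 ⟨ht.1.le, ht.2.le⟩) hmem0 ht.2
      rwa [hg20] at this
    have hg1 : ∀ t ∈ Ioo (-δ) (0:ℝ), 0 < g1 t := by
      intro t ht
      have := anti_of_hasDerivAt' h2 hg2
        (Set.mem_Icc.2 ⟨ht.1.le, ht.2.le⟩) hmem0 ht.2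
      rwa [hg10] at this
    refine min_contra_left hmin hδ (fun t ht => ?_)
    exact mono_of_hasDerivAt' h1 hg1 (Set.mem_Icc.2 ⟨ht.1.le, ht.2.le⟩) hmem0 ht.2

private lemma min_d4' {g g1 g2 g3 g4 : ℝ → ℝ}
    (h1 : ∀ t, HasDerivAt g (g1 t) t) (h2 : ∀ t, HasDerivAt g1 (g2 t) t)
    (h3 : ∀ t, HasDerivAt g2 (g3 t) t) (h4 : ∀ t, HasDerivAt g3 (g4 t) t)
    (hc : ContinuousAt g4 0) (hmin : IsLocalMin g 0)
    (hg20 : g2 0 = 0) (hg30 : g3 0 = 0) : 0 ≤ g4 0 := by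
  by_contra hlt
  push_neg at hlt
  obtain ⟨δ, hδ, hg4⟩ := exists_delta_neg hc hlt
  have hg10 : g1 0 = 0 := by have := hmin.deriv_eq_zero; rwa [(h1 0).deriv] at this
  have hg3 : ∀ t ∈ Ioo (0:ℝ) δ, g3 t < 0 :=
    neg_right' h4 hg30 (fun t ht => hg4 t (by rw [abs_of_pos ht.1]; exact ht.2))
  have hg2 : ∀ t ∈ Ioo (0:ℝ) δ, g2 t < 0 := neg_right' h3 hg20 hg3
  have hg1 : ∀ t ∈ Ioo (0:ℝ) δ, g1 t < 0 := neg_right' h2 hg10 hg2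
  refine min_contra_right hmin hδ (fun t ht => ?_)
  exact anti_of_hasDerivAt' h1 hg1
    (Set.mem_Icc.2 ⟨le_refl 0, (ht.1.trans ht.2).le⟩) (Set.mem_Icc.2 ⟨ht.1.le, ht.2.le⟩) ht.1


variable {E : Type*} [NormedAddCommGroup E] [NormedSpace ℝ E]

private noncomputable instance instNACG2 : NormedAddCommGroup (E →L[ℝ] E →L[ℝ] ℝ) :=
  @ContinuousLinearMap.toNormedAddCommGroup ℝ ℝ E (E →L[ℝ] ℝ) _ inferInstance _ _ _
    inferInstance (RingHom.id ℝ) _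

private noncomputable instance instNS2 : NormedSpace ℝ (E →L[ℝ] E →L[ℝ] ℝ) :=
  @ContinuousLinearMap.toNormedSpace ℝ ℝ E (E →L[ℝ] ℝ) _ inferInstance _ _ _
    inferInstance (RingHom.id ℝ) _ ℝ _ inferInstance _

private noncomputable instance instNACG3 : NormedAddCommGroup (E →L[ℝ] E →L[ℝ] E →L[ℝ] ℝ) :=
  @ContinuousLinearMap.toNormedAddCommGroup ℝ ℝ E (E →L[ℝ] E →L[ℝ] ℝ) _ inferInstance _ _ _
    inferInstance (RingHom.id ℝ) _

private noncomputable instance instNS3 : NormedSpace ℝ (E →L[ℝ] E →L[ℝ] E →L[ℝ] ℝ) :=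
  @ContinuousLinearMap.toNormedSpace ℝ ℝ E (E →L[ℝ] E →L[ℝ] ℝ) _ inferInstance _ _ _
    inferInstance (RingHom.id ℝ) _ ℝ _ inferInstance _

private lemma itfd_three' {F : Type*} [NormedAddCommGroup F] [NormedSpace ℝ F]
    (f : E → F) (z : E) (m : Fin 3 → E) :
    iteratedFDeriv ℝ 3 f z m
      = fderiv ℝ (fderiv ℝ (fderiv ℝ f)) z (m 0) (m 1) (m 2) := by
  rw [iteratedFDeriv_succ_apply_right, iteratedFDeriv_two_apply]; rfl

private lemma itfd_four' {F : Type*} [NormedAddCommGroup F] [NormedSpace ℝ F]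
    (f : E → F) (z : E) (m : Fin 4 → E) :
    iteratedFDeriv ℝ 4 f z m
      = fderiv ℝ (fderiv ℝ (fderiv ℝ (fderiv ℝ f))) z (m 0) (m 1) (m 2) (m 3) := by
  rw [iteratedFDeriv_succ_apply_right, itfd_three']; rfl

private lemma d2_symm' {f : E → ℝ} (hf : ContDiff ℝ 4 f) (y a b : E) :
    fderiv ℝ (fderiv ℝ f) y a b = fderiv ℝ (fderiv ℝ f) y b a :=
  (hf.contDiffAt.isSymmSndFDerivAt (by norm_num)).eq a b

private lemma d3_symm12' {f : E → ℝ} (hf : ContDiff ℝ 4 f) (y a b : E) :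
    fderiv ℝ (fderiv ℝ (fderiv ℝ f)) y a b = fderiv ℝ (fderiv ℝ (fderiv ℝ f)) y b a :=
  ((hf.fderiv_right (m := 3) (by norm_num)).contDiffAt.isSymmSndFDerivAt (by norm_num)).eq a b

private lemma d3_symm23' {f : E → ℝ} (hf : ContDiff ℝ 4 f) (y a b c : E) :
    fderiv ℝ (fderiv ℝ (fderiv ℝ f)) y a b c = fderiv ℝ (fderiv ℝ (fderiv ℝ f)) y a c b := by
  have hd2 : Differentiable ℝ (fderiv ℝ (fderiv ℝ f)) :=
    ((hf.fderiv_right (m := 3) (by norm_num)).fderiv_right (m := 2) (by norm_num)).differentiable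
      (by norm_num)
  have key : ∀ p q : E,
      fderiv ℝ (fun z => fderiv ℝ (fderiv ℝ f) z p q) y
        = ((ContinuousLinearMap.apply ℝ ℝ q).comp
            (ContinuousLinearMap.apply ℝ (E →L[ℝ] ℝ) p)).comp
              (fderiv ℝ (fderiv ℝ (fderiv ℝ f)) y) := by
    intro p q
    have h := ((hd2 y).hasFDerivAt.clm_apply (hasFDerivAt_const p y)).clm_apply
      (hasFDerivAt_const q y)
    rw [h.fderiv]; ext a; simp
  have e1 : (fun z => fderiv ℝ (fderiv ℝ f) z b c) = (fun z => fderiv ℝ (fderiv ℝ f) z c b) :=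
    funext fun z => d2_symm' hf z b c
  have h2 := key b c
  rw [e1, key c b] at h2
  have := ContinuousLinearMap.ext_iff.1 h2 a
  simpa using this.symm

private lemma H_nonneg' {f : E → ℝ} {x : E} (hf : ContDiff ℝ 4 f) (hmin : IsLocalMin f x)
    (e : E) : 0 ≤ (fderiv ℝ (fderiv ℝ f)) x e e := by
  have hfd : Differentiable ℝ f := hf.differentiable (by norm_num)
  have hd1 : ContDiff ℝ 3 (fderiv ℝ f) := hf.fderiv_right (m := 3) (by norm_num)
  have hd1d : Differentiable ℝ (fderiv ℝ f) := hd1.differentiable (by norm_num)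
  have hd2c : Continuous (fderiv ℝ (fderiv ℝ f)) := (hd1.fderiv_right (m := 2) (by norm_num)).continuous
  set u : ℝ → E := fun r => x + r • e with hu_def
  have hu : ∀ r : ℝ, HasDerivAt u e r := by
    intro r
    have := ((hasDerivAt_id r).smul_const e).const_add x
    rw [hu_def]; simpa using this
  have hucont : Continuous u := continuous_const.add (continuous_id.smul continuous_const)
  have hu0 : u 0 = x := by simp [hu_def]
  have hg1 : ∀ r : ℝ, HasDerivAt (fun s => f (u s)) ((fderiv ℝ f) (u r) e) r :=
    fun r => (hfd (u r)).hasFDerivAt.comp_hasDerivAt r (hu r)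
  have hg2 : ∀ r : ℝ, HasDerivAt (fun s => (fderiv ℝ f) (u s) e) ((fderiv ℝ (fderiv ℝ f)) (u r) e e) r := by
    intro r
    have hA : HasDerivAt (fun s => (fderiv ℝ f) (u s)) ((fderiv ℝ (fderiv ℝ f)) (u r) e) r :=
      (hd1d (u r)).hasFDerivAt.comp_hasDerivAt r (hu r)
    have := hA.clm_apply (hasDerivAt_const r e)
    simpa using this
  have hcont : ContinuousAt (fun r => (fderiv ℝ (fderiv ℝ f)) (u r) e e) 0 :=
    (((hd2c.comp hucont).clm_apply continuous_const).clm_apply continuous_const).continuousAt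
  have hming : IsLocalMin (fun s => f (u s)) 0 :=
    IsLocalMin.comp_continuous (by rwa [hu0]) hucont.continuousAt
  have := min_d2' hg1 hg2 hcont hming
  rwa [hu0] at this

private lemma curve_ineq' {f : E → ℝ} {x : E} (hf : ContDiff ℝ 4 f) (hmin : IsLocalMin f x)
    (e v : E) (hv : (fderiv ℝ (fderiv ℝ f)) x v = 0) (c : ℝ) :
    0 ≤ (fderiv ℝ (fderiv ℝ (fderiv ℝ (fderiv ℝ f)))) x v v v v + 12 * c * ((fderiv ℝ (fderiv ℝ (fderiv ℝ f))) x e v v) + 12 * c ^ 2 * ((fderiv ℝ (fderiv ℝ f)) x e e) := by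
  have hfd : Differentiable ℝ f := hf.differentiable (by norm_num)
  have hd1 : ContDiff ℝ 3 (fderiv ℝ f) := hf.fderiv_right (m := 3) (by norm_num)
  have hd2 : ContDiff ℝ 2 (fderiv ℝ (fderiv ℝ f)) := hd1.fderiv_right (m := 2) (by norm_num)
  have hd3 : ContDiff ℝ 1 (fderiv ℝ (fderiv ℝ (fderiv ℝ f))) := hd2.fderiv_right (m := 1) (by norm_num)
  have hd1d : Differentiable ℝ (fderiv ℝ f) := hd1.differentiable (by norm_num)
  have hd2d : Differentiable ℝ (fderiv ℝ (fderiv ℝ f)) := hd2.differentiable (by norm_num)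
  have hd3d : Differentiable ℝ (fderiv ℝ (fderiv ℝ (fderiv ℝ f))) := hd3.differentiable (by norm_num)
  have hd3c : Continuous (fderiv ℝ (fderiv ℝ (fderiv ℝ f))) := hd3.continuous
  have hd2c : Continuous (fderiv ℝ (fderiv ℝ f)) := hd2.continuous
  have hd4c : Continuous (fderiv ℝ (fderiv ℝ (fderiv ℝ (fderiv ℝ f)))) := (hd3.fderiv_right (m := 0) (by norm_num)).continuous
  set u : ℝ → E := fun r => x + (c * r ^ 2) • e + r • v with hu_def
  set w : ℝ → E := fun r => (2*c*r) • e + v with hw_def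
  have hu : ∀ r : ℝ, HasDerivAt u (w r) r := by
    intro r
    have h1 : HasDerivAt (fun s : ℝ => c * s ^ 2) (2*c*r) r := by
      have h := (hasDerivAt_pow 2 r).const_mul c
      have h2 : c * ((2:ℕ) * r ^ (2-1)) = 2*c*r := by norm_num; ring
      rwa [h2] at h
    have h3 := ((h1.smul_const e).const_add x).add ((hasDerivAt_id r).smul_const v)
    rw [hu_def, hw_def]; simp at h3 ⊢; exact h3
  have hw : ∀ r : ℝ, HasDerivAt w ((2*c) • e) r := by
    intro r
    have h1 : HasDerivAt (fun s : ℝ => 2*c*s) (2*c) r := by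
      simpa [mul_assoc] using (hasDerivAt_id r).const_mul (2*c)
    exact (h1.smul_const e).add_const v
  have hucont : Continuous u := by
    rw [hu_def]; fun_prop
  have hwcont : Continuous w := by
    rw [hw_def]; fun_prop
  have hu0 : u 0 = x := by simp [hu_def]
  have hw0 : w 0 = v := by simp [hw_def]
  have hg1 : ∀ r : ℝ, HasDerivAt (fun s => f (u s)) ((fderiv ℝ f) (u r) (w r)) r :=
    fun r => (hfd (u r)).hasFDerivAt.comp_hasDerivAt r (hu r)
  have hA1 : ∀ r : ℝ, HasDerivAt (fun s => (fderiv ℝ f) (u s)) ((fderiv ℝ (fderiv ℝ f)) (u r) (w r)) r :=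
    fun r => (hd1d (u r)).hasFDerivAt.comp_hasDerivAt r (hu r)
  have hA2 : ∀ r : ℝ, HasDerivAt (fun s => (fderiv ℝ (fderiv ℝ f)) (u s)) ((fderiv ℝ (fderiv ℝ (fderiv ℝ f))) (u r) (w r)) r :=
    fun r => by have h := (hd2d (u r)).hasFDerivAt.comp_hasDerivAt r (hu r); exact h
  have hA3 : ∀ r : ℝ, HasDerivAt (fun s => (fderiv ℝ (fderiv ℝ (fderiv ℝ f))) (u s)) ((fderiv ℝ (fderiv ℝ (fderiv ℝ (fderiv ℝ f)))) (u r) (w r)) r :=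
    fun r => (hd3d (u r)).hasFDerivAt.comp_hasDerivAt r (hu r)
  have hg2 : ∀ r : ℝ, HasDerivAt (fun s => (fderiv ℝ f) (u s) (w s))
      ((fderiv ℝ (fderiv ℝ f)) (u r) (w r) (w r) + (fderiv ℝ f) (u r) ((2*c) • e)) r := fun r => (hA1 r).clm_apply (hw r)
  have hB : ∀ r : ℝ, HasDerivAt (fun s => (fderiv ℝ (fderiv ℝ f)) (u s) (w s))
      ((fderiv ℝ (fderiv ℝ (fderiv ℝ f))) (u r) (w r) (w r) + (fderiv ℝ (fderiv ℝ f)) (u r) ((2*c) • e)) r := fun r => (hA2 r).clm_apply (hw r)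
  have hB2 : ∀ r : ℝ, HasDerivAt (fun s => (fderiv ℝ (fderiv ℝ f)) (u s) (w s) (w s))
      (((fderiv ℝ (fderiv ℝ (fderiv ℝ f))) (u r) (w r) (w r) + (fderiv ℝ (fderiv ℝ f)) (u r) ((2*c) • e)) (w r) + (fderiv ℝ (fderiv ℝ f)) (u r) (w r) ((2*c) • e)) r :=
    fun r => (hB r).clm_apply (hw r)
  have hg3 : ∀ r : ℝ, HasDerivAt (fun s => (fderiv ℝ (fderiv ℝ f)) (u s) (w s) (w s) + (fderiv ℝ f) (u s) ((2*c) • e))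
      ((fderiv ℝ (fderiv ℝ (fderiv ℝ f))) (u r) (w r) (w r) (w r) + 2 * ((fderiv ℝ (fderiv ℝ f)) (u r) (w r) ((2*c) • e)) + (fderiv ℝ (fderiv ℝ f)) (u r) ((2*c) • e) (w r)) r := by
    intro r
    have hC : HasDerivAt (fun s => (fderiv ℝ f) (u s) ((2*c) • e)) ((fderiv ℝ (fderiv ℝ f)) (u r) (w r) ((2*c) • e) + (fderiv ℝ f) (u r) 0) r :=
      (hA1 r).clm_apply (hasDerivAt_const r ((2*c) • e))
    have htot := (hB2 r).add hC
    have heq : ((fderiv ℝ (fderiv ℝ (fderiv ℝ f))) (u r) (w r) (w r) + (fderiv ℝ (fderiv ℝ f)) (u r) ((2*c) • e)) (w r) + (fderiv ℝ (fderiv ℝ f)) (u r) (w r) ((2*c) • e)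
        + ((fderiv ℝ (fderiv ℝ f)) (u r) (w r) ((2*c) • e) + (fderiv ℝ f) (u r) 0)
        = (fderiv ℝ (fderiv ℝ (fderiv ℝ f))) (u r) (w r) (w r) (w r) + 2 * ((fderiv ℝ (fderiv ℝ f)) (u r) (w r) ((2*c) • e)) + (fderiv ℝ (fderiv ℝ f)) (u r) ((2*c) • e) (w r) := by
      simp only [ContinuousLinearMap.add_apply, map_zero]
      ring
    rwa [heq] at htot
  have hT1 : ∀ r : ℝ, HasDerivAt (fun s => (fderiv ℝ (fderiv ℝ (fderiv ℝ f))) (u s) (w s))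
      ((fderiv ℝ (fderiv ℝ (fderiv ℝ (fderiv ℝ f)))) (u r) (w r) (w r) + (fderiv ℝ (fderiv ℝ (fderiv ℝ f))) (u r) ((2*c) • e)) r := fun r => (hA3 r).clm_apply (hw r)
  have hT2 : ∀ r : ℝ, HasDerivAt (fun s => (fderiv ℝ (fderiv ℝ (fderiv ℝ f))) (u s) (w s) (w s))
      (((fderiv ℝ (fderiv ℝ (fderiv ℝ (fderiv ℝ f)))) (u r) (w r) (w r) + (fderiv ℝ (fderiv ℝ (fderiv ℝ f))) (u r) ((2*c) • e)) (w r) + (fderiv ℝ (fderiv ℝ (fderiv ℝ f))) (u r) (w r) ((2*c) • e)) r :=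
    fun r => (hT1 r).clm_apply (hw r)
  have hT3 : ∀ r : ℝ, HasDerivAt (fun s => (fderiv ℝ (fderiv ℝ (fderiv ℝ f))) (u s) (w s) (w s) (w s))
      ((((fderiv ℝ (fderiv ℝ (fderiv ℝ (fderiv ℝ f)))) (u r) (w r) (w r) + (fderiv ℝ (fderiv ℝ (fderiv ℝ f))) (u r) ((2*c) • e)) (w r) + (fderiv ℝ (fderiv ℝ (fderiv ℝ f))) (u r) (w r) ((2*c) • e)) (w r)
        + (fderiv ℝ (fderiv ℝ (fderiv ℝ f))) (u r) (w r) (w r) ((2*c) • e)) r :=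
    fun r => (hT2 r).clm_apply (hw r)
  have hg4 : ∀ r : ℝ, HasDerivAt
      (fun r => (fderiv ℝ (fderiv ℝ (fderiv ℝ f))) (u r) (w r) (w r) (w r) + 2 * ((fderiv ℝ (fderiv ℝ f)) (u r) (w r) ((2*c) • e)) + (fderiv ℝ (fderiv ℝ f)) (u r) ((2*c) • e) (w r))
      ((fderiv ℝ (fderiv ℝ (fderiv ℝ (fderiv ℝ f)))) (u r) (w r) (w r) (w r) (w r)
        + (fderiv ℝ (fderiv ℝ (fderiv ℝ f))) (u r) ((2*c) • e) (w r) (w r) + 2 * ((fderiv ℝ (fderiv ℝ (fderiv ℝ f))) (u r) (w r) ((2*c) • e) (w r))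
        + 3 * ((fderiv ℝ (fderiv ℝ (fderiv ℝ f))) (u r) (w r) (w r) ((2*c) • e)) + 3 * ((fderiv ℝ (fderiv ℝ f)) (u r) ((2*c) • e) ((2*c) • e))) r := by
    intro r
    have hU1 : HasDerivAt (fun s => (fderiv ℝ (fderiv ℝ f)) (u s) (w s) ((2*c) • e))
        (((fderiv ℝ (fderiv ℝ (fderiv ℝ f))) (u r) (w r) (w r) + (fderiv ℝ (fderiv ℝ f)) (u r) ((2*c) • e)) ((2*c) • e) + (fderiv ℝ (fderiv ℝ f)) (u r) (w r) 0) r :=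
      (hB r).clm_apply (hasDerivAt_const r ((2*c) • e))
    have hU : HasDerivAt (fun s => 2 * ((fderiv ℝ (fderiv ℝ f)) (u s) (w s) ((2*c) • e)))
        (2 * (((fderiv ℝ (fderiv ℝ (fderiv ℝ f))) (u r) (w r) (w r) + (fderiv ℝ (fderiv ℝ f)) (u r) ((2*c) • e)) ((2*c) • e) + (fderiv ℝ (fderiv ℝ f)) (u r) (w r) 0)) r :=
      hU1.const_mul 2
    have hV1 : HasDerivAt (fun s => (fderiv ℝ (fderiv ℝ f)) (u s) ((2*c) • e)) ((fderiv ℝ (fderiv ℝ (fderiv ℝ f))) (u r) (w r) ((2*c) • e) + (fderiv ℝ (fderiv ℝ f)) (u r) 0) r :=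
      (hA2 r).clm_apply (hasDerivAt_const r ((2*c) • e))
    have hV : HasDerivAt (fun s => (fderiv ℝ (fderiv ℝ f)) (u s) ((2*c) • e) (w s))
        (((fderiv ℝ (fderiv ℝ (fderiv ℝ f))) (u r) (w r) ((2*c) • e) + (fderiv ℝ (fderiv ℝ f)) (u r) 0) (w r) + (fderiv ℝ (fderiv ℝ f)) (u r) ((2*c) • e) ((2*c) • e)) r :=
      hV1.clm_apply (hw r)
    have htot := ((hT3 r).add hU).add hV
    have heq : ((((fderiv ℝ (fderiv ℝ (fderiv ℝ (fderiv ℝ f)))) (u r) (w r) (w r) + (fderiv ℝ (fderiv ℝ (fderiv ℝ f))) (u r) ((2*c) • e)) (w r) + (fderiv ℝ (fderiv ℝ (fderiv ℝ f))) (u r) (w r) ((2*c) • e)) (w r)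
          + (fderiv ℝ (fderiv ℝ (fderiv ℝ f))) (u r) (w r) (w r) ((2*c) • e))
        + 2 * (((fderiv ℝ (fderiv ℝ (fderiv ℝ f))) (u r) (w r) (w r) + (fderiv ℝ (fderiv ℝ f)) (u r) ((2*c) • e)) ((2*c) • e) + (fderiv ℝ (fderiv ℝ f)) (u r) (w r) 0)
        + (((fderiv ℝ (fderiv ℝ (fderiv ℝ f))) (u r) (w r) ((2*c) • e) + (fderiv ℝ (fderiv ℝ f)) (u r) 0) (w r) + (fderiv ℝ (fderiv ℝ f)) (u r) ((2*c) • e) ((2*c) • e))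
        = (fderiv ℝ (fderiv ℝ (fderiv ℝ (fderiv ℝ f)))) (u r) (w r) (w r) (w r) (w r)
          + (fderiv ℝ (fderiv ℝ (fderiv ℝ f))) (u r) ((2*c) • e) (w r) (w r) + 2 * ((fderiv ℝ (fderiv ℝ (fderiv ℝ f))) (u r) (w r) ((2*c) • e) (w r))
          + 3 * ((fderiv ℝ (fderiv ℝ (fderiv ℝ f))) (u r) (w r) (w r) ((2*c) • e)) + 3 * ((fderiv ℝ (fderiv ℝ f)) (u r) ((2*c) • e) ((2*c) • e)) := by
      simp only [ContinuousLinearMap.add_apply, ContinuousLinearMap.zero_apply, map_zero]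
      ring
    rwa [heq] at htot
  have hg4cont : ContinuousAt (fun r => (fderiv ℝ (fderiv ℝ (fderiv ℝ (fderiv ℝ f)))) (u r) (w r) (w r) (w r) (w r)
      + (fderiv ℝ (fderiv ℝ (fderiv ℝ f))) (u r) ((2*c) • e) (w r) (w r) + 2 * ((fderiv ℝ (fderiv ℝ (fderiv ℝ f))) (u r) (w r) ((2*c) • e) (w r))
      + 3 * ((fderiv ℝ (fderiv ℝ (fderiv ℝ f))) (u r) (w r) (w r) ((2*c) • e)) + 3 * ((fderiv ℝ (fderiv ℝ f)) (u r) ((2*c) • e) ((2*c) • e))) 0 := by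
    have cD4 : Continuous fun r => (fderiv ℝ (fderiv ℝ (fderiv ℝ (fderiv ℝ f)))) (u r) := hd4c.comp hucont
    have cD3 : Continuous fun r => (fderiv ℝ (fderiv ℝ (fderiv ℝ f))) (u r) := hd3c.comp hucont
    have cD2 : Continuous fun r => (fderiv ℝ (fderiv ℝ f)) (u r) := hd2c.comp hucont
    have c1 : Continuous fun r => (fderiv ℝ (fderiv ℝ (fderiv ℝ (fderiv ℝ f)))) (u r) (w r) (w r) (w r) (w r) :=
      (((cD4.clm_apply hwcont).clm_apply hwcont).clm_apply hwcont).clm_apply hwcont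
    have c2 : Continuous fun r => (fderiv ℝ (fderiv ℝ (fderiv ℝ f))) (u r) ((2*c) • e) (w r) (w r) :=
      ((cD3.clm_apply continuous_const).clm_apply hwcont).clm_apply hwcont
    have c3 : Continuous fun r => 2 * ((fderiv ℝ (fderiv ℝ (fderiv ℝ f))) (u r) (w r) ((2*c) • e) (w r)) :=
      continuous_const.mul (((cD3.clm_apply hwcont).clm_apply continuous_const).clm_apply hwcont)
    have c4 : Continuous fun r => 3 * ((fderiv ℝ (fderiv ℝ (fderiv ℝ f))) (u r) (w r) (w r) ((2*c) • e)) :=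
      continuous_const.mul (((cD3.clm_apply hwcont).clm_apply hwcont).clm_apply continuous_const)
    have c5 : Continuous fun r => 3 * ((fderiv ℝ (fderiv ℝ f)) (u r) ((2*c) • e) ((2*c) • e)) :=
      continuous_const.mul ((cD2.clm_apply continuous_const).clm_apply continuous_const)
    exact ((((c1.add c2).add c3).add c4).add c5).continuousAt
  have hming : IsLocalMin (fun s => f (u s)) 0 :=
    IsLocalMin.comp_continuous (by rwa [hu0]) hucont.continuousAt
  have hD1x : (fderiv ℝ f) x = 0 := hmin.fderiv_eq_zero
  have hg20val : (fderiv ℝ (fderiv ℝ f)) (u 0) (w 0) (w 0) + (fderiv ℝ f) (u 0) ((2*c) • e) = 0 := by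
    rw [hu0, hw0, hv, hD1x]; simp
  have hg30 : (fderiv ℝ (fderiv ℝ (fderiv ℝ f))) (u 0) (w 0) (w 0) (w 0) + 2 * ((fderiv ℝ (fderiv ℝ f)) (u 0) (w 0) ((2*c) • e)) + (fderiv ℝ (fderiv ℝ f)) (u 0) ((2*c) • e) (w 0)
      = 0 := min_d3' hg1 hg2 hg3 (hg4 0).continuousAt hming hg20val
  have h4q : 0 ≤ (fderiv ℝ (fderiv ℝ (fderiv ℝ (fderiv ℝ f)))) (u 0) (w 0) (w 0) (w 0) (w 0)
      + (fderiv ℝ (fderiv ℝ (fderiv ℝ f))) (u 0) ((2*c) • e) (w 0) (w 0) + 2 * ((fderiv ℝ (fderiv ℝ (fderiv ℝ f))) (u 0) (w 0) ((2*c) • e) (w 0))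
      + 3 * ((fderiv ℝ (fderiv ℝ (fderiv ℝ f))) (u 0) (w 0) (w 0) ((2*c) • e)) + 3 * ((fderiv ℝ (fderiv ℝ f)) (u 0) ((2*c) • e) ((2*c) • e)) :=
    min_d4' hg1 hg2 hg3 hg4 hg4cont hming hg20val hg30
  rw [hu0, hw0] at h4q
  rw [d3_symm23' hf x v v ((2*c) • e), d3_symm12' hf x v ((2*c) • e)] at h4q
  simp only [map_smul, ContinuousLinearMap.smul_apply, smul_eq_mul] at h4q
  nlinarith [h4q]

private lemma quad_wrap {H T Q : ℝ} (hH : 0 ≤ H)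
    (hkey : ∀ c : ℝ, 0 ≤ Q + 12 * c * T + 12 * c ^ 2 * H) :
    (∀ lam : ℝ, 0 ≤ 1/2 * H + lam/2 * T + lam^2/24 * Q) ∧ T^2 ≤ 1/3 * H * Q := by
  have hQ : 0 ≤ Q := by have := hkey 0; nlinarith
  constructor
  · intro lam
    rcases eq_or_ne lam 0 with h | h
    · subst h; norm_num; linarith
    · have h2 : 0 ≤ (Q + 12 * (1/lam) * T + 12 * (1/lam)^2 * H) * (lam^2/24) :=
        mul_nonneg (hkey _) (by positivity)
      have h3 : (Q + 12 * (1/lam) * T + 12 * (1/lam)^2 * H) * (lam^2/24)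
          = 1/2 * H + lam/2 * T + lam^2/24 * Q := by
        field_simp
        ring
      linarith
  · have hd := discrim_le_zero (a := 12*H) (b := 12*T) (c := Q) (fun z => by nlinarith [hkey z])
    rw [discrim] at hd
    nlinarith [hd]

/-- With F = ker ∇²f(x*) and E = Fᗮ at a local minimum, the quadratic (in λ)
(1/2)∇²f·p_E(h)^{⊗2} + (λ/2)∇³f·p_E(h)⊗p_F(h)^{⊗2} + (λ²/4!)∇⁴f·p_F(h)^{⊗4}
is nonnegative; consequently the discriminant inequality
(∇³f·p_E(h)⊗p_F(h)^{⊗2})² ≤ (1/3)(∇²f·p_E(h)^{⊗2})(∇⁴f·p_F(h)^{⊗4}) holds. -/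
theorem stmt19 (d : ℕ) (f : EuclideanSpace ℝ (Fin d) → ℝ) (x : EuclideanSpace ℝ (Fin d))
    (hf : ContDiff ℝ 4 f) (hmin : IsLocalMin f x)
    (F : Submodule ℝ (EuclideanSpace ℝ (Fin d)))
    (hF : ∀ v, v ∈ F ↔ ∀ w : EuclideanSpace ℝ (Fin d), iteratedFDeriv ℝ 2 f x ![v, w] = 0) :
    (∀ (h : EuclideanSpace ℝ (Fin d)) (lam : ℝ),
      0 ≤ (1 / 2) * iteratedFDeriv ℝ 2 f x
            ![(Submodule.orthogonalProjectionOnto Fᗮ h : EuclideanSpace ℝ (Fin d)),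
              (Submodule.orthogonalProjectionOnto Fᗮ h : EuclideanSpace ℝ (Fin d))]
        + (lam / 2) * iteratedFDeriv ℝ 3 f x
            ![(Submodule.orthogonalProjectionOnto Fᗮ h : EuclideanSpace ℝ (Fin d)),
              (Submodule.orthogonalProjectionOnto F h : EuclideanSpace ℝ (Fin d)),
              (Submodule.orthogonalProjectionOnto F h : EuclideanSpace ℝ (Fin d))]
        + (lam ^ 2 / (Nat.factorial 4) : ℝ) * iteratedFDeriv ℝ 4 f x
            (fun _ => (Submodule.orthogonalProjectionOnto F h : EuclideanSpace ℝ (Fin d)))) ∧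
    (∀ h : EuclideanSpace ℝ (Fin d),
      (iteratedFDeriv ℝ 3 f x
          ![(Submodule.orthogonalProjectionOnto Fᗮ h : EuclideanSpace ℝ (Fin d)),
            (Submodule.orthogonalProjectionOnto F h : EuclideanSpace ℝ (Fin d)),
            (Submodule.orthogonalProjectionOnto F h : EuclideanSpace ℝ (Fin d))]) ^ 2 ≤
        (1 / 3) * (iteratedFDeriv ℝ 2 f x
            ![(Submodule.orthogonalProjectionOnto Fᗮ h : EuclideanSpace ℝ (Fin d)),
              (Submodule.orthogonalProjectionOnto Fᗮ h : EuclideanSpace ℝ (Fin d))]) *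
          (iteratedFDeriv ℝ 4 f x
            (fun _ => (Submodule.orthogonalProjectionOnto F h : EuclideanSpace ℝ (Fin d))))) := by
  have main : ∀ h : EuclideanSpace ℝ (Fin d),
      (∀ lam : ℝ, 0 ≤ 1/2 * (fderiv ℝ (fderiv ℝ f) x
            (Submodule.orthogonalProjectionOnto Fᗮ h : EuclideanSpace ℝ (Fin d))
            (Submodule.orthogonalProjectionOnto Fᗮ h : EuclideanSpace ℝ (Fin d)))
          + lam/2 * (fderiv ℝ (fderiv ℝ (fderiv ℝ f)) x
            (Submodule.orthogonalProjectionOnto Fᗮ h : EuclideanSpace ℝ (Fin d))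
            (Submodule.orthogonalProjectionOnto F h : EuclideanSpace ℝ (Fin d))
            (Submodule.orthogonalProjectionOnto F h : EuclideanSpace ℝ (Fin d)))
          + lam^2/24 * (fderiv ℝ (fderiv ℝ (fderiv ℝ (fderiv ℝ f))) x
            (Submodule.orthogonalProjectionOnto F h : EuclideanSpace ℝ (Fin d))
            (Submodule.orthogonalProjectionOnto F h : EuclideanSpace ℝ (Fin d))
            (Submodule.orthogonalProjectionOnto F h : EuclideanSpace ℝ (Fin d))
            (Submodule.orthogonalProjectionOnto F h : EuclideanSpace ℝ (Fin d)))) ∧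
        (fderiv ℝ (fderiv ℝ (fderiv ℝ f)) x
            (Submodule.orthogonalProjectionOnto Fᗮ h : EuclideanSpace ℝ (Fin d))
            (Submodule.orthogonalProjectionOnto F h : EuclideanSpace ℝ (Fin d))
            (Submodule.orthogonalProjectionOnto F h : EuclideanSpace ℝ (Fin d)))^2
          ≤ 1/3 * (fderiv ℝ (fderiv ℝ f) x
            (Submodule.orthogonalProjectionOnto Fᗮ h : EuclideanSpace ℝ (Fin d))
            (Submodule.orthogonalProjectionOnto Fᗮ h : EuclideanSpace ℝ (Fin d)))
            * (fderiv ℝ (fderiv ℝ (fderiv ℝ (fderiv ℝ f))) x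
            (Submodule.orthogonalProjectionOnto F h : EuclideanSpace ℝ (Fin d))
            (Submodule.orthogonalProjectionOnto F h : EuclideanSpace ℝ (Fin d))
            (Submodule.orthogonalProjectionOnto F h : EuclideanSpace ℝ (Fin d))
            (Submodule.orthogonalProjectionOnto F h : EuclideanSpace ℝ (Fin d))) := by
    intro h
    have hv0 : fderiv ℝ (fderiv ℝ f) x (Submodule.orthogonalProjectionOnto F h : EuclideanSpace ℝ (Fin d))
        = 0 := by
      apply ContinuousLinearMap.ext
      intro z
      have := (hF _).1 (SetLike.coe_mem (Submodule.orthogonalProjectionOnto F h)) z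
      rw [iteratedFDeriv_two_apply] at this
      simpa using this
    exact quad_wrap
      (H_nonneg' hf hmin (Submodule.orthogonalProjectionOnto Fᗮ h : EuclideanSpace ℝ (Fin d)))
      (curve_ineq' hf hmin _ _ hv0)
  have hfact : ((Nat.factorial 4 : ℕ) : ℝ) = 24 := by norm_num [Nat.factorial]
  constructor
  · intro h lam
    have h1 := (main h).1 lam
    rw [iteratedFDeriv_two_apply, itfd_three', itfd_four', hfact]
    simp only [Matrix.cons_val_zero, Matrix.cons_val_one, Matrix.head_cons, Matrix.cons_val_two,
      Matrix.tail_cons]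
    linarith
  · intro h
    have h2 := (main h).2
    rw [iteratedFDeriv_two_apply, itfd_three', itfd_four']
    simp only [Matrix.cons_val_zero, Matrix.cons_val_one, Matrix.head_cons, Matrix.cons_val_two,
      Matrix.tail_cons]
    linarith
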